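/- Consistent disparity: let n ≥ 2 and let w_1, …, w_n and w'_1, …, w'_n be two families of positive weights with the same total sum (Σ_i w_i = Σ_i w'_i = s), which agree on all but the first two entries (w_i = w'_i for all 3 ≤ i ≤ n). If |w_1 − w_2| < |w'_1 − w'_2|, then the C-degree of the first family is strictly larger than that of the second: r(w) > r(w'). -/

import Mathlib

open Real

/-- two-point majorization for `negMulLog`, ordered case. -/
lemma negMulLog_two_point_aux (x y x' y' : ℝ) (hx : 0 < x) (hx' : 0 < x')
    (hxy : x ≤ y) (hxy' : x' ≤ y')
    (hsum : x + y = x' + y') (hlt : |x - y| < |x' - y'|) :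
    Real.negMulLog x' + Real.negMulLog y' < Real.negMulLog x + Real.negMulLog y := by
  have h1 : y - x < y' - x' := by
    rwa [abs_sub_comm, abs_of_nonneg (by linarith), abs_sub_comm, abs_of_nonneg (by linarith)]
      at hlt
  have hx'x : x' < x := by linarith
  have hyy' : y < y' := by linarith
  have hx'y' : x' < y' := lt_of_lt_of_le (lt_of_lt_of_le hx'x hxy) (le_of_lt hyy')
  set l : ℝ := (y' - x) / (y' - x') with hl
  have hd : 0 < y' - x' := by linarith
  have hl0 : 0 < l := div_pos (by linarith) hd
  have hl1 : l < 1 := by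
    rw [hl, div_lt_one hd]; linarith
  have hxeq : x = l * x' + (1 - l) * y' := by
    have hlm : l * (y' - x') = y' - x := by rw [hl]; exact div_mul_cancel₀ _ hd.ne'
    linear_combination hlm
  have hyeq : y = (1 - l) * x' + l * y' := by
    field_simp [hl]; ring_nf; nlinarith [hsum]
  have hc := Real.strictConcaveOn_negMulLog
  have hmx' : x' ∈ Set.Ici (0:ℝ) := le_of_lt hx'
  have hmy' : y' ∈ Set.Ici (0:ℝ) := by
    have h : (0:ℝ) < y' := by linarith
    exact le_of_lt h
  have hne : x' ≠ y' := ne_of_lt hx'y'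
  have h2 := hc.2 hmx' hmy' hne hl0 (by linarith : (0:ℝ) < 1 - l) (by ring)
  have h3 := hc.2 hmx' hmy' hne (by linarith : (0:ℝ) < 1 - l) hl0 (by ring)
  simp only [smul_eq_mul] at h2 h3
  rw [← hxeq] at h2
  rw [← hyeq] at h3
  nlinarith [h2, h3]

lemma negMulLog_two_point (x y x' y' : ℝ) (hx : 0 < x) (hy : 0 < y)
    (hx' : 0 < x') (hy' : 0 < y')
    (hsum : x + y = x' + y') (hlt : |x - y| < |x' - y'|) :
    Real.negMulLog x' + Real.negMulLog y' < Real.negMulLog x + Real.negMulLog y := by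
  rcases le_total x y with h | h <;> rcases le_total x' y' with h' | h'
  · exact negMulLog_two_point_aux x y x' y' hx hx' h h' hsum hlt
  · have := negMulLog_two_point_aux x y y' x' hx hy' h h' (by linarith)
      (by rwa [abs_sub_comm y' x'])
    linarith
  · have := negMulLog_two_point_aux y x x' y' hy hx' h h' (by linarith)
      (by rwa [abs_sub_comm x y] at hlt)
    linarith
  · have := negMulLog_two_point_aux y x y' x' hy hy' h h' (by linarith)
      (by rw [abs_sub_comm x y] at hlt; rwa [abs_sub_comm y' x'])
    linarith

/-- The C-degree of a node whose incident edge weights are `w : Fin n → ℝ`: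
`2` raised to the Shannon entropy (in bits) of the interaction probability
distribution `p i = w i / s`, where `s = ∑ i, w i` is the node's strength. -/
noncomputable def cdeg {n : ℕ} (w : Fin n → ℝ) : ℝ :=
  (2 : ℝ) ^ (∑ i, (w i / (∑ j, w j)) * Real.logb 2 ((∑ j, w j) / w i))

/-- Consistent disparity: two positive weight families on `n ≥ 2` edges with
the same total strength, agreeing on all but the first two entries; if the
first family's two uncommon weights are closer to each other than the second
family's, its C-degree is strictly larger. -/
theorem cdeg_consistent_disparity {n : ℕ} (hn : 2 ≤ n)
    (w w' : Fin n → ℝ) (hw : ∀ i, 0 < w i) (hw' : ∀ i, 0 < w' i)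
    (hsum : ∑ i, w i = ∑ i, w' i)
    (hagree : ∀ i : Fin n, 2 ≤ (i : ℕ) → w i = w' i)
    (hlt : |w ⟨0, by omega⟩ - w ⟨1, by omega⟩| <
           |w' ⟨0, by omega⟩ - w' ⟨1, by omega⟩|) :
    cdeg w > cdeg w' := by
  set s : ℝ := ∑ i, w i with hs
  have hspos : 0 < s := Finset.sum_pos (fun i _ => hw i) ⟨⟨0, by omega⟩, Finset.mem_univ _⟩
  set i0 : Fin n := ⟨0, by omega⟩
  set i1 : Fin n := ⟨1, by omega⟩
  have hi01 : i0 ≠ i1 := by simp [i0, i1, Fin.ext_iff]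
  -- term rewrite: each summand equals negMulLog (w i / s) / log 2
  have hterm : ∀ (v : Fin n → ℝ), (∀ i, 0 < v i) → (∑ i, v i) = s →
      (∑ i, (v i / (∑ j, v j)) * Real.logb 2 ((∑ j, v j) / v i))
        = (∑ i, Real.negMulLog (v i / s)) / Real.log 2 := by
    intro v hv hvs
    rw [Finset.sum_div]
    refine Finset.sum_congr rfl fun i _ => ?_
    rw [hvs, Real.logb, Real.negMulLog, Real.log_div (ne_of_gt hspos) (ne_of_gt (hv i)),
      Real.log_div (ne_of_gt (hv i)) (ne_of_gt hspos)]
    field_simp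
    ring
  -- pair sum extraction
  have hpairsum : w i0 + w i1 = w' i0 + w' i1 := by
    have h0 : ∑ i, (w i - w' i) = 0 := by
      rw [Finset.sum_sub_distrib, ← hs, hsum, sub_self]
    have h1 : ∑ i, (w i - w' i) = ∑ i ∈ ({i0, i1} : Finset (Fin n)), (w i - w' i) := by
      refine (Finset.sum_subset (Finset.subset_univ _) ?_).symm
      intro x _ hx
      have : 2 ≤ (x : ℕ) := by
        simp only [Finset.mem_insert, Finset.mem_singleton] at hx
        push_neg at hx
        obtain ⟨h0', h1'⟩ := hx
        have := x.isLt
        rcases Nat.lt_or_ge (x : ℕ) 2 with h | h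
        · interval_cases h' : (x : ℕ)
          · exact absurd (Fin.ext h') h0'
          · exact absurd (Fin.ext h') h1'
        · exact h
      simp [hagree x this]
    rw [h1, Finset.sum_pair hi01] at h0
    linarith
  -- key entropy inequality
  have hkey : (∑ i, Real.negMulLog (w' i / s)) < ∑ i, Real.negMulLog (w i / s) := by
    have hdiff : ∑ i, (Real.negMulLog (w i / s) - Real.negMulLog (w' i / s))
        = ∑ i ∈ ({i0, i1} : Finset (Fin n)),
            (Real.negMulLog (w i / s) - Real.negMulLog (w' i / s)) := by
      refine (Finset.sum_subset (Finset.subset_univ _) ?_).symm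
      intro x _ hx
      have : 2 ≤ (x : ℕ) := by
        simp only [Finset.mem_insert, Finset.mem_singleton] at hx
        push_neg at hx
        obtain ⟨h0', h1'⟩ := hx
        rcases Nat.lt_or_ge (x : ℕ) 2 with h | h
        · interval_cases h' : (x : ℕ)
          · exact absurd (Fin.ext h') h0'
          · exact absurd (Fin.ext h') h1'
        · exact h
      simp [hagree x this]
    have hpt := negMulLog_two_point (w i0 / s) (w i1 / s) (w' i0 / s) (w' i1 / s)
      (div_pos (hw i0) hspos) (div_pos (hw i1) hspos)
      (div_pos (hw' i0) hspos) (div_pos (hw' i1) hspos)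
      (by rw [← add_div, ← add_div, hpairsum])
      (by
        rw [← sub_div, ← sub_div, abs_div, abs_div, abs_of_pos hspos]
        exact (div_lt_div_iff_of_pos_right hspos).mpr hlt)
    have : 0 < ∑ i, (Real.negMulLog (w i / s) - Real.negMulLog (w' i / s)) := by
      rw [hdiff, Finset.sum_pair hi01]
      linarith
    rw [Finset.sum_sub_distrib] at this
    linarith
  -- assemble
  have hE : (∑ i, (w' i / (∑ j, w' j)) * Real.logb 2 ((∑ j, w' j) / w' i))
      < (∑ i, (w i / (∑ j, w j)) * Real.logb 2 ((∑ j, w j) / w i)) := by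
    rw [hterm w hw rfl, hterm w' hw' hsum.symm]
    exact (div_lt_div_iff_of_pos_right (Real.log_pos one_lt_two)).mpr hkey
  unfold cdeg
  exact Real.rpow_lt_rpow_left_iff (by norm_num : (1:ℝ) < 2) |>.mpr hE
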